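/- Let i = √−1 and set H = {M ∈ G(i) : det M = 1} and K = the cyclic subgroup of G(i) generated by R_i. Then H is a normal subgroup of G(i), K has order 4, H ∩ K is trivial, and every element of G(i) is a product of an element of H and an element of K (so G(i) is an internal semidirect product H ⋊ K of order 96); moreover G(i) is NOT isomorphic to the direct product SL(2, 𝔽₃) × C₄, where C₄ is the cyclic group of order 4. -/

import Mathlib

open GaussianInt

/-! ### Auxiliary: 2×2 matrices over the Gaussian integers, as a computable structure -/

structure Q where
  a : GaussianInt
  b : GaussianInt
  c : GaussianInt
  d : GaussianInt
deriving DecidableEq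

namespace Q
instance : Mul Q := ⟨fun x y => ⟨x.a*y.a + x.b*y.c, x.a*y.b + x.b*y.d,
  x.c*y.a + x.d*y.c, x.c*y.b + x.d*y.d⟩⟩
instance : One Q := ⟨⟨1, 0, 0, 1⟩⟩
theorem mul_def (x y : Q) : x * y = ⟨x.a*y.a + x.b*y.c, x.a*y.b + x.b*y.d,
  x.c*y.a + x.d*y.c, x.c*y.b + x.d*y.d⟩ := rfl
theorem one_def : (1 : Q) = ⟨1, 0, 0, 1⟩ := rfl
end Q

noncomputable def toMC (q : Q) : Matrix (Fin 2) (Fin 2) ℂ :=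
  !![(q.a : ℂ), (q.b : ℂ); (q.c : ℂ), (q.d : ℂ)]

theorem toMC_mul (x y : Q) : toMC (x * y) = toMC x * toMC y := by
  simp only [toMC, Matrix.mul_fin_two, Q.mul_def, map_add, map_mul]

theorem toMC_one : toMC 1 = 1 := by
  simp [toMC, Q.one_def, Matrix.one_fin_two]

theorem toMC_inj : Function.Injective toMC := by
  rintro ⟨a,b,c,d⟩ ⟨a',b',c',d'⟩ h
  have h00 := congrFun (congrFun h 0) 0
  have h01 := congrFun (congrFun h 0) 1
  have h10 := congrFun (congrFun h 1) 0
  have h11 := congrFun (congrFun h 1) 1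
  simp [toMC, toComplex_inj] at h00 h01 h10 h11
  simp [h00, h01, h10, h11]

def qR : Q := ⟨⟨0,1⟩, 1, 0, 1⟩
def qS : Q := ⟨0, ⟨0,1⟩, 1, 0⟩
def qRi : Q := ⟨⟨0,-1⟩, ⟨0,1⟩, 0, 1⟩
def qSi : Q := ⟨0, 1, ⟨0,-1⟩, 0⟩

theorem qRi_mul : qRi * qR = 1 := by decide
theorem qSi_mul : qSi * qS = 1 := by decide
def T0 : List Q := [
  ⟨(⟨1, 0⟩ : GaussianInt), (⟨0, 0⟩ : GaussianInt), (⟨0, 0⟩ : GaussianInt), (⟨1, 0⟩ : GaussianInt)⟩,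
  ⟨(⟨0, 1⟩ : GaussianInt), (⟨1, 0⟩ : GaussianInt), (⟨0, 0⟩ : GaussianInt), (⟨1, 0⟩ : GaussianInt)⟩,
  ⟨(⟨0, 0⟩ : GaussianInt), (⟨0, 1⟩ : GaussianInt), (⟨1, 0⟩ : GaussianInt), (⟨0, 0⟩ : GaussianInt)⟩,
  ⟨(⟨-1, 0⟩ : GaussianInt), (⟨1, 1⟩ : GaussianInt), (⟨0, 0⟩ : GaussianInt), (⟨1, 0⟩ : GaussianInt)⟩,
  ⟨(⟨0, 0⟩ : GaussianInt), (⟨0, 1⟩ : GaussianInt), (⟨0, 1⟩ : GaussianInt), (⟨1, 0⟩ : GaussianInt)⟩,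
  ⟨(⟨1, 0⟩ : GaussianInt), (⟨-1, 0⟩ : GaussianInt), (⟨1, 0⟩ : GaussianInt), (⟨0, 0⟩ : GaussianInt)⟩,
  ⟨(⟨0, 1⟩ : GaussianInt), (⟨0, 0⟩ : GaussianInt), (⟨0, 0⟩ : GaussianInt), (⟨0, 1⟩ : GaussianInt)⟩,
  ⟨(⟨0, -1⟩ : GaussianInt), (⟨0, 1⟩ : GaussianInt), (⟨0, 0⟩ : GaussianInt), (⟨1, 0⟩ : GaussianInt)⟩,
  ⟨(⟨0, 0⟩ : GaussianInt), (⟨0, 1⟩ : GaussianInt), (⟨-1, 0⟩ : GaussianInt), (⟨1, 1⟩ : GaussianInt)⟩,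
  ⟨(⟨0, 1⟩ : GaussianInt), (⟨0, 0⟩ : GaussianInt), (⟨0, 1⟩ : GaussianInt), (⟨1, 0⟩ : GaussianInt)⟩,
  ⟨(⟨-1, 0⟩ : GaussianInt), (⟨0, 1⟩ : GaussianInt), (⟨0, 0⟩ : GaussianInt), (⟨0, 1⟩ : GaussianInt)⟩,
  ⟨(⟨1, 1⟩ : GaussianInt), (⟨0, -1⟩ : GaussianInt), (⟨1, 0⟩ : GaussianInt), (⟨0, 0⟩ : GaussianInt)⟩,
  ⟨(⟨0, 1⟩ : GaussianInt), (⟨0, 0⟩ : GaussianInt), (⟨1, 0⟩ : GaussianInt), (⟨-1, 0⟩ : GaussianInt)⟩,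
  ⟨(⟨0, 0⟩ : GaussianInt), (⟨-1, 0⟩ : GaussianInt), (⟨0, 1⟩ : GaussianInt), (⟨0, 0⟩ : GaussianInt)⟩,
  ⟨(⟨0, 0⟩ : GaussianInt), (⟨0, 1⟩ : GaussianInt), (⟨0, -1⟩ : GaussianInt), (⟨0, 1⟩ : GaussianInt)⟩,
  ⟨(⟨-1, 0⟩ : GaussianInt), (⟨0, 1⟩ : GaussianInt), (⟨-1, 0⟩ : GaussianInt), (⟨1, 1⟩ : GaussianInt)⟩]

def T1 : List Q := [
  ⟨(⟨0, -1⟩ : GaussianInt), (⟨-1, 1⟩ : GaussianInt), (⟨0, 0⟩ : GaussianInt), (⟨0, 1⟩ : GaussianInt)⟩,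
  ⟨(⟨-1, 1⟩ : GaussianInt), (⟨1, 0⟩ : GaussianInt), (⟨0, 1⟩ : GaussianInt), (⟨1, 0⟩ : GaussianInt)⟩,
  ⟨(⟨-1, 0⟩ : GaussianInt), (⟨0, 1⟩ : GaussianInt), (⟨0, 1⟩ : GaussianInt), (⟨0, 0⟩ : GaussianInt)⟩,
  ⟨(⟨0, 0⟩ : GaussianInt), (⟨-1, 0⟩ : GaussianInt), (⟨-1, 0⟩ : GaussianInt), (⟨0, 1⟩ : GaussianInt)⟩,
  ⟨(⟨0, 1⟩ : GaussianInt), (⟨1, 0⟩ : GaussianInt), (⟨1, 0⟩ : GaussianInt), (⟨0, 0⟩ : GaussianInt)⟩,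
  ⟨(⟨0, 1⟩ : GaussianInt), (⟨0, 0⟩ : GaussianInt), (⟨1, 1⟩ : GaussianInt), (⟨0, -1⟩ : GaussianInt)⟩,
  ⟨(⟨0, 0⟩ : GaussianInt), (⟨-1, 0⟩ : GaussianInt), (⟨1, 0⟩ : GaussianInt), (⟨-1, 0⟩ : GaussianInt)⟩,
  ⟨(⟨0, 1⟩ : GaussianInt), (⟨0, -1⟩ : GaussianInt), (⟨0, 1⟩ : GaussianInt), (⟨0, 0⟩ : GaussianInt)⟩,
  ⟨(⟨-1, 0⟩ : GaussianInt), (⟨0, 0⟩ : GaussianInt), (⟨0, 0⟩ : GaussianInt), (⟨-1, 0⟩ : GaussianInt)⟩,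
  ⟨(⟨0, -1⟩ : GaussianInt), (⟨-1, 1⟩ : GaussianInt), (⟨0, -1⟩ : GaussianInt), (⟨0, 1⟩ : GaussianInt)⟩,
  ⟨(⟨1, 0⟩ : GaussianInt), (⟨-1, 0⟩ : GaussianInt), (⟨0, 0⟩ : GaussianInt), (⟨0, 1⟩ : GaussianInt)⟩,
  ⟨(⟨-1, -1⟩ : GaussianInt), (⟨0, 1⟩ : GaussianInt), (⟨-1, 0⟩ : GaussianInt), (⟨1, 1⟩ : GaussianInt)⟩,
  ⟨(⟨0, -1⟩ : GaussianInt), (⟨-1, 1⟩ : GaussianInt), (⟨-1, 0⟩ : GaussianInt), (⟨0, 1⟩ : GaussianInt)⟩,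
  ⟨(⟨0, 0⟩ : GaussianInt), (⟨-1, 0⟩ : GaussianInt), (⟨0, -1⟩ : GaussianInt), (⟨-1, 1⟩ : GaussianInt)⟩,
  ⟨(⟨-1, 0⟩ : GaussianInt), (⟨1, 1⟩ : GaussianInt), (⟨0, 1⟩ : GaussianInt), (⟨1, 0⟩ : GaussianInt)⟩,
  ⟨(⟨-1, 0⟩ : GaussianInt), (⟨0, 1⟩ : GaussianInt), (⟨-1, 1⟩ : GaussianInt), (⟨1, 0⟩ : GaussianInt)⟩]

def T2 : List Q := [
  ⟨(⟨-1, 0⟩ : GaussianInt), (⟨0, 0⟩ : GaussianInt), (⟨-1, 0⟩ : GaussianInt), (⟨0, 1⟩ : GaussianInt)⟩,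
  ⟨(⟨0, -1⟩ : GaussianInt), (⟨-1, 0⟩ : GaussianInt), (⟨0, 0⟩ : GaussianInt), (⟨-1, 0⟩ : GaussianInt)⟩,
  ⟨(⟨0, 1⟩ : GaussianInt), (⟨0, -1⟩ : GaussianInt), (⟨1, 1⟩ : GaussianInt), (⟨0, -1⟩ : GaussianInt)⟩,
  ⟨(⟨-1, 1⟩ : GaussianInt), (⟨1, 0⟩ : GaussianInt), (⟨0, 1⟩ : GaussianInt), (⟨0, 0⟩ : GaussianInt)⟩,
  ⟨(⟨1, 0⟩ : GaussianInt), (⟨-1, -1⟩ : GaussianInt), (⟨1, 0⟩ : GaussianInt), (⟨-1, 0⟩ : GaussianInt)⟩,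
  ⟨(⟨0, 1⟩ : GaussianInt), (⟨0, -1⟩ : GaussianInt), (⟨0, 0⟩ : GaussianInt), (⟨-1, 0⟩ : GaussianInt)⟩,
  ⟨(⟨-1, 0⟩ : GaussianInt), (⟨0, 0⟩ : GaussianInt), (⟨0, 1⟩ : GaussianInt), (⟨0, -1⟩ : GaussianInt)⟩,
  ⟨(⟨0, 0⟩ : GaussianInt), (⟨0, -1⟩ : GaussianInt), (⟨-1, 0⟩ : GaussianInt), (⟨0, 0⟩ : GaussianInt)⟩,
  ⟨(⟨1, -1⟩ : GaussianInt), (⟨-1, 0⟩ : GaussianInt), (⟨0, -1⟩ : GaussianInt), (⟨0, 1⟩ : GaussianInt)⟩,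
  ⟨(⟨1, 0⟩ : GaussianInt), (⟨-1, 0⟩ : GaussianInt), (⟨0, -1⟩ : GaussianInt), (⟨-1, 1⟩ : GaussianInt)⟩,
  ⟨(⟨0, -1⟩ : GaussianInt), (⟨0, 1⟩ : GaussianInt), (⟨-1, 0⟩ : GaussianInt), (⟨1, 1⟩ : GaussianInt)⟩,
  ⟨(⟨0, -1⟩ : GaussianInt), (⟨-1, 1⟩ : GaussianInt), (⟨-1, -1⟩ : GaussianInt), (⟨0, 1⟩ : GaussianInt)⟩,
  ⟨(⟨0, -1⟩ : GaussianInt), (⟨-1, 0⟩ : GaussianInt), (⟨0, -1⟩ : GaussianInt), (⟨-1, 1⟩ : GaussianInt)⟩,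
  ⟨(⟨1, 0⟩ : GaussianInt), (⟨-1, -1⟩ : GaussianInt), (⟨0, 0⟩ : GaussianInt), (⟨-1, 0⟩ : GaussianInt)⟩,
  ⟨(⟨-1, 0⟩ : GaussianInt), (⟨0, 0⟩ : GaussianInt), (⟨-1, 1⟩ : GaussianInt), (⟨1, 0⟩ : GaussianInt)⟩,
  ⟨(⟨-1, -1⟩ : GaussianInt), (⟨0, 1⟩ : GaussianInt), (⟨-1, 0⟩ : GaussianInt), (⟨0, 1⟩ : GaussianInt)⟩]

def T3 : List Q := [
  ⟨(⟨0, -1⟩ : GaussianInt), (⟨-1, 0⟩ : GaussianInt), (⟨-1, 0⟩ : GaussianInt), (⟨0, 0⟩ : GaussianInt)⟩,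
  ⟨(⟨0, 0⟩ : GaussianInt), (⟨0, -1⟩ : GaussianInt), (⟨0, -1⟩ : GaussianInt), (⟨-1, 0⟩ : GaussianInt)⟩,
  ⟨(⟨0, 1⟩ : GaussianInt), (⟨1, -1⟩ : GaussianInt), (⟨1, 1⟩ : GaussianInt), (⟨0, -1⟩ : GaussianInt)⟩,
  ⟨(⟨-1, 1⟩ : GaussianInt), (⟨1, 0⟩ : GaussianInt), (⟨0, 1⟩ : GaussianInt), (⟨0, -1⟩ : GaussianInt)⟩,
  ⟨(⟨1, 1⟩ : GaussianInt), (⟨0, -1⟩ : GaussianInt), (⟨1, 0⟩ : GaussianInt), (⟨-1, 0⟩ : GaussianInt)⟩,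
  ⟨(⟨0, 1⟩ : GaussianInt), (⟨0, -1⟩ : GaussianInt), (⟨1, 0⟩ : GaussianInt), (⟨-1, -1⟩ : GaussianInt)⟩,
  ⟨(⟨0, 0⟩ : GaussianInt), (⟨0, -1⟩ : GaussianInt), (⟨0, 1⟩ : GaussianInt), (⟨0, -1⟩ : GaussianInt)⟩,
  ⟨(⟨-1, 0⟩ : GaussianInt), (⟨1, 0⟩ : GaussianInt), (⟨-1, 0⟩ : GaussianInt), (⟨0, 0⟩ : GaussianInt)⟩,
  ⟨(⟨0, -1⟩ : GaussianInt), (⟨0, 0⟩ : GaussianInt), (⟨0, 0⟩ : GaussianInt), (⟨0, -1⟩ : GaussianInt)⟩,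
  ⟨(⟨1, 0⟩ : GaussianInt), (⟨0, 0⟩ : GaussianInt), (⟨0, -1⟩ : GaussianInt), (⟨0, 1⟩ : GaussianInt)⟩,
  ⟨(⟨1, 0⟩ : GaussianInt), (⟨-1, 0⟩ : GaussianInt), (⟨1, -1⟩ : GaussianInt), (⟨-1, 0⟩ : GaussianInt)⟩,
  ⟨(⟨0, -1⟩ : GaussianInt), (⟨-1, 0⟩ : GaussianInt), (⟨-1, -1⟩ : GaussianInt), (⟨0, 1⟩ : GaussianInt)⟩,
  ⟨(⟨1, -1⟩ : GaussianInt), (⟨-1, 0⟩ : GaussianInt), (⟨0, -1⟩ : GaussianInt), (⟨-1, 1⟩ : GaussianInt)⟩,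
  ⟨(⟨1, 0⟩ : GaussianInt), (⟨-1, -1⟩ : GaussianInt), (⟨0, -1⟩ : GaussianInt), (⟨-1, 0⟩ : GaussianInt)⟩,
  ⟨(⟨0, 0⟩ : GaussianInt), (⟨0, -1⟩ : GaussianInt), (⟨1, 0⟩ : GaussianInt), (⟨-1, -1⟩ : GaussianInt)⟩,
  ⟨(⟨-1, 0⟩ : GaussianInt), (⟨1, 0⟩ : GaussianInt), (⟨-1, 1⟩ : GaussianInt), (⟨1, 0⟩ : GaussianInt)⟩]

def T4 : List Q := [
  ⟨(⟨-1, -1⟩ : GaussianInt), (⟨0, 1⟩ : GaussianInt), (⟨-1, 0⟩ : GaussianInt), (⟨0, 0⟩ : GaussianInt)⟩,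
  ⟨(⟨0, -1⟩ : GaussianInt), (⟨0, 0⟩ : GaussianInt), (⟨0, -1⟩ : GaussianInt), (⟨-1, 0⟩ : GaussianInt)⟩,
  ⟨(⟨1, 0⟩ : GaussianInt), (⟨0, -1⟩ : GaussianInt), (⟨0, 0⟩ : GaussianInt), (⟨0, -1⟩ : GaussianInt)⟩,
  ⟨(⟨0, 1⟩ : GaussianInt), (⟨1, 0⟩ : GaussianInt), (⟨1, 1⟩ : GaussianInt), (⟨0, -1⟩ : GaussianInt)⟩,
  ⟨(⟨-1, 1⟩ : GaussianInt), (⟨1, 0⟩ : GaussianInt), (⟨0, 1⟩ : GaussianInt), (⟨1, -1⟩ : GaussianInt)⟩,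
  ⟨(⟨0, 1⟩ : GaussianInt), (⟨1, -1⟩ : GaussianInt), (⟨0, 1⟩ : GaussianInt), (⟨0, -1⟩ : GaussianInt)⟩,
  ⟨(⟨-1, 0⟩ : GaussianInt), (⟨1, 0⟩ : GaussianInt), (⟨0, 0⟩ : GaussianInt), (⟨0, -1⟩ : GaussianInt)⟩,
  ⟨(⟨0, -1⟩ : GaussianInt), (⟨0, 0⟩ : GaussianInt), (⟨-1, 0⟩ : GaussianInt), (⟨1, 0⟩ : GaussianInt)⟩,
  ⟨(⟨0, 0⟩ : GaussianInt), (⟨1, 0⟩ : GaussianInt), (⟨0, -1⟩ : GaussianInt), (⟨0, 0⟩ : GaussianInt)⟩,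
  ⟨(⟨1, 0⟩ : GaussianInt), (⟨-1, -1⟩ : GaussianInt), (⟨1, -1⟩ : GaussianInt), (⟨-1, 0⟩ : GaussianInt)⟩,
  ⟨(⟨0, -1⟩ : GaussianInt), (⟨0, 0⟩ : GaussianInt), (⟨-1, -1⟩ : GaussianInt), (⟨0, 1⟩ : GaussianInt)⟩,
  ⟨(⟨1, -1⟩ : GaussianInt), (⟨-1, 0⟩ : GaussianInt), (⟨0, -1⟩ : GaussianInt), (⟨-1, 0⟩ : GaussianInt)⟩,
  ⟨(⟨1, 0⟩ : GaussianInt), (⟨0, -1⟩ : GaussianInt), (⟨1, 0⟩ : GaussianInt), (⟨-1, -1⟩ : GaussianInt)⟩,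
  ⟨(⟨0, 1⟩ : GaussianInt), (⟨1, -1⟩ : GaussianInt), (⟨0, 0⟩ : GaussianInt), (⟨0, -1⟩ : GaussianInt)⟩,
  ⟨(⟨-1, 0⟩ : GaussianInt), (⟨1, 1⟩ : GaussianInt), (⟨-1, 1⟩ : GaussianInt), (⟨1, 0⟩ : GaussianInt)⟩,
  ⟨(⟨-1, -1⟩ : GaussianInt), (⟨0, 1⟩ : GaussianInt), (⟨-1, 0⟩ : GaussianInt), (⟨1, 0⟩ : GaussianInt)⟩]

def T5 : List Q := [
  ⟨(⟨1, 0⟩ : GaussianInt), (⟨0, -1⟩ : GaussianInt), (⟨0, -1⟩ : GaussianInt), (⟨0, 0⟩ : GaussianInt)⟩,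
  ⟨(⟨0, 0⟩ : GaussianInt), (⟨1, 0⟩ : GaussianInt), (⟨1, 0⟩ : GaussianInt), (⟨0, -1⟩ : GaussianInt)⟩,
  ⟨(⟨-1, 0⟩ : GaussianInt), (⟨1, 0⟩ : GaussianInt), (⟨0, 1⟩ : GaussianInt), (⟨1, -1⟩ : GaussianInt)⟩,
  ⟨(⟨0, 0⟩ : GaussianInt), (⟨1, 0⟩ : GaussianInt), (⟨-1, 0⟩ : GaussianInt), (⟨1, 0⟩ : GaussianInt)⟩,
  ⟨(⟨0, -1⟩ : GaussianInt), (⟨0, 1⟩ : GaussianInt), (⟨0, -1⟩ : GaussianInt), (⟨0, 0⟩ : GaussianInt)⟩,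
  ⟨(⟨1, 0⟩ : GaussianInt), (⟨0, -1⟩ : GaussianInt), (⟨1, -1⟩ : GaussianInt), (⟨-1, 0⟩ : GaussianInt)⟩,
  ⟨(⟨1, 1⟩ : GaussianInt), (⟨0, -1⟩ : GaussianInt), (⟨1, 0⟩ : GaussianInt), (⟨-1, -1⟩ : GaussianInt)⟩,
  ⟨(⟨0, -1⟩ : GaussianInt), (⟨0, 1⟩ : GaussianInt), (⟨-1, -1⟩ : GaussianInt), (⟨0, 1⟩ : GaussianInt)⟩,
  ⟨(⟨1, -1⟩ : GaussianInt), (⟨-1, 0⟩ : GaussianInt), (⟨0, -1⟩ : GaussianInt), (⟨0, 0⟩ : GaussianInt)⟩,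
  ⟨(⟨0, 1⟩ : GaussianInt), (⟨1, -1⟩ : GaussianInt), (⟨1, 0⟩ : GaussianInt), (⟨0, -1⟩ : GaussianInt)⟩,
  ⟨(⟨0, 0⟩ : GaussianInt), (⟨1, 0⟩ : GaussianInt), (⟨0, 1⟩ : GaussianInt), (⟨1, -1⟩ : GaussianInt)⟩,
  ⟨(⟨1, 0⟩ : GaussianInt), (⟨0, 0⟩ : GaussianInt), (⟨1, 0⟩ : GaussianInt), (⟨0, -1⟩ : GaussianInt)⟩,
  ⟨(⟨-1, 0⟩ : GaussianInt), (⟨1, 1⟩ : GaussianInt), (⟨-1, 0⟩ : GaussianInt), (⟨1, 0⟩ : GaussianInt)⟩,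
  ⟨(⟨1, 0⟩ : GaussianInt), (⟨0, 0⟩ : GaussianInt), (⟨1, -1⟩ : GaussianInt), (⟨-1, 0⟩ : GaussianInt)⟩,
  ⟨(⟨1, 1⟩ : GaussianInt), (⟨0, -1⟩ : GaussianInt), (⟨1, 0⟩ : GaussianInt), (⟨0, -1⟩ : GaussianInt)⟩,
  ⟨(⟨0, 1⟩ : GaussianInt), (⟨1, 0⟩ : GaussianInt), (⟨0, 1⟩ : GaussianInt), (⟨1, -1⟩ : GaussianInt)⟩]

def Tlist : List Q := T0 ++ T1 ++ T2 ++ T3 ++ T4 ++ T5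
def W : List (List Bool) := [
  [],
  [true],
  [false],
  [true, true],
  [false, true],
  [true, false],
  [false, false],
  [true, true, true],
  [false, true, true],
  [true, false, true],
  [false, false, true],
  [true, true, false],
  [false, true, false],
  [false, false, false],
  [false, true, true, true],
  [true, false, true, true],
  [false, false, true, true],
  [true, true, false, true],
  [false, true, false, true],
  [false, false, false, true],
  [true, true, true, false],
  [false, true, true, false],
  [true, false, true, false],
  [false, false, true, false],
  [false, false, false, false],
  [true, false, true, true, true],
  [false, false, true, true, true],
  [true, true, false, true, true],
  [false, true, false, true, true],
  [false, false, false, true, true],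
  [true, true, true, false, true],
  [false, true, true, false, true],
  [false, false, true, false, true],
  [false, false, false, false, true],
  [true, false, true, true, false],
  [false, false, true, true, false],
  [true, true, false, true, false],
  [false, true, false, true, false],
  [false, false, false, true, false],
  [false, false, false, false, false],
  [true, true, false, true, true, true],
  [false, true, false, true, true, true],
  [true, true, true, false, true, true],
  [false, true, true, false, true, true],
  [false, false, true, false, true, true],
  [false, false, false, false, true, true],
  [true, false, true, true, false, true],
  [false, false, true, true, false, true],
  [false, false, false, true, false, true],
  [false, false, false, false, false, true],
  [true, true, false, true, true, false],
  [false, true, false, true, true, false],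
  [true, true, true, false, true, false],
  [false, true, true, false, true, false],
  [false, false, true, false, true, false],
  [false, false, false, false, true, false],
  [false, false, false, false, false, false],
  [true, true, true, false, true, true, true],
  [false, true, true, false, true, true, true],
  [true, false, true, true, false, true, true],
  [false, false, true, true, false, true, true],
  [false, false, false, true, false, true, true],
  [false, false, false, false, false, true, true],
  [true, true, false, true, true, false, true],
  [false, true, false, true, true, false, true],
  [false, false, false, false, true, false, true],
  [false, false, false, false, false, false, true],
  [true, true, true, false, true, true, false],
  [false, true, true, false, true, true, false],
  [false, false, true, true, false, true, false],
  [false, false, false, true, false, true, false],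
  [false, false, false, false, false, true, false],
  [false, false, false, false, false, false, false],
  [true, false, true, true, false, true, true, true],
  [true, true, false, true, true, false, true, true],
  [false, true, false, true, true, false, true, true],
  [false, false, false, false, true, false, true, true],
  [false, false, false, false, false, false, true, true],
  [true, true, true, false, true, true, false, true],
  [false, true, true, false, true, true, false, true],
  [false, false, false, false, false, true, false, true],
  [false, false, false, false, false, false, false, true],
  [true, false, true, true, false, true, true, false],
  [false, false, false, false, true, false, true, false],
  [false, false, false, false, false, false, true, false],
  [true, true, false, true, true, false, true, true, true],
  [false, true, false, true, true, false, true, true, true],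
  [true, true, true, false, true, true, false, true, true],
  [false, true, true, false, true, true, false, true, true],
  [false, false, false, false, false, true, false, true, true],
  [false, false, false, false, false, false, false, true, true],
  [false, false, false, false, false, false, true, false, true],
  [false, true, false, true, true, false, true, true, false],
  [true, true, true, false, true, true, false, true, true, true],
  [false, true, true, false, true, true, false, true, true, true],
  [false, false, false, false, false, false, true, false, true, true]]

set_option maxRecDepth 40000 in
theorem h1T : (1 : Q) ∈ Tlist := by decide
set_option maxRecDepth 100000 in
theorem hnodupT : Tlist.Nodup := by decide
set_option maxRecDepth 100000 in
theorem hclosR : ∀ t ∈ Tlist, qR * t ∈ Tlist := by decide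
set_option maxRecDepth 100000 in
theorem hclosS : ∀ t ∈ Tlist, qS * t ∈ Tlist := by decide
set_option maxRecDepth 100000 in
theorem hclosRi : ∀ t ∈ Tlist, qRi * t ∈ Tlist := by decide
set_option maxRecDepth 100000 in
theorem hclosSi : ∀ t ∈ Tlist, qSi * t ∈ Tlist := by decide

def wordQ (l : List Bool) : Q := l.foldr (fun b acc => (if b then qR else qS) * acc) 1

set_option maxRecDepth 100000 in
theorem hWmap : W.map wordQ = Tlist := by decide
set_option maxRecDepth 100000 in
theorem hTlen : Tlist.length = 96 := by decide

noncomputable def Rmat (ζ : ℂ) : Matrix (Fin 2) (Fin 2) ℂ := !![ζ, 1; 0, 1]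

noncomputable def Smat (ζ : ℂ) : Matrix (Fin 2) (Fin 2) ℂ := !![0, -ζ⁻¹; 1, 0]

noncomputable def G (ζ : ℂ) : Subgroup (Matrix.GeneralLinearGroup (Fin 2) ℂ) :=
  Subgroup.closure {A : Matrix.GeneralLinearGroup (Fin 2) ℂ |
    (A : Matrix (Fin 2) (Fin 2) ℂ) = Rmat ζ ∨ (A : Matrix (Fin 2) (Fin 2) ℂ) = Smat ζ}

theorem hRmat : Rmat Complex.I = toMC qR := by
  simp [Rmat, toMC, qR, toComplex_def]

theorem hSmat : Smat Complex.I = toMC qS := by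
  simp [Smat, toMC, qS, toComplex_def, Complex.inv_I]

theorem det_Rmat : (Rmat Complex.I).det = Complex.I := by
  simp [Rmat, Matrix.det_fin_two_of]

theorem det_Smat : (Smat Complex.I).det = Complex.I⁻¹ := by
  simp [Smat, Matrix.det_fin_two_of]

noncomputable def uR : Matrix.GeneralLinearGroup (Fin 2) ℂ :=
  ((Matrix.isUnit_iff_isUnit_det _).mpr (isUnit_iff_ne_zero.mpr (by
    rw [det_Rmat]; exact Complex.I_ne_zero))).unit

noncomputable def uS : Matrix.GeneralLinearGroup (Fin 2) ℂ :=
  ((Matrix.isUnit_iff_isUnit_det _).mpr (isUnit_iff_ne_zero.mpr (by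
    rw [det_Smat]; exact inv_ne_zero Complex.I_ne_zero))).unit

theorem uR_val : (uR : Matrix (Fin 2) (Fin 2) ℂ) = Rmat Complex.I := IsUnit.unit_spec _
theorem uS_val : (uS : Matrix (Fin 2) (Fin 2) ℂ) = Smat Complex.I := IsUnit.unit_spec _

theorem uR_mem : uR ∈ G Complex.I := Subgroup.subset_closure (Or.inl uR_val)
theorem uS_mem : uS ∈ G Complex.I := Subgroup.subset_closure (Or.inr uS_val)

noncomputable def wordU (l : List Bool) : Matrix.GeneralLinearGroup (Fin 2) ℂ :=
  l.foldr (fun b acc => (if b then uR else uS) * acc) 1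

theorem wordU_mem (l : List Bool) : wordU l ∈ G Complex.I := by
  induction l with
  | nil => exact one_mem _
  | cons b l ih =>
    exact mul_mem (by cases b <;> [exact uS_mem; exact uR_mem]) ih

theorem wordU_val (l : List Bool) :
    ((wordU l : Matrix.GeneralLinearGroup (Fin 2) ℂ) : Matrix (Fin 2) (Fin 2) ℂ)
      = toMC (wordQ l) := by
  induction l with
  | nil => exact (Units.val_one).trans toMC_one.symm
  | cons b l ih =>
    have : wordU (b :: l) = (if b then uR else uS) * wordU l := rfl
    rw [this, Units.val_mul, ih]
    cases b
    · show (uS : Matrix (Fin 2) (Fin 2) ℂ) * _ = toMC (qS * wordQ l)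
      rw [uS_val, hSmat, toMC_mul]
    · show (uR : Matrix (Fin 2) (Fin 2) ℂ) * _ = toMC (qR * wordQ l)
      rw [uR_val, hRmat, toMC_mul]


/-- The subgroup of `GL(2, ℂ)` consisting of matrices of determinant `1`. -/
noncomputable def detOne : Subgroup (Matrix.GeneralLinearGroup (Fin 2) ℂ) where
  carrier := {M | (M : Matrix (Fin 2) (Fin 2) ℂ).det = 1}
  one_mem' := by simp
  mul_mem' := by
    intro a b ha hb
    simp only [Set.mem_setOf_eq, Units.val_mul, Matrix.det_mul] at *
    rw [ha, hb, one_mul]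
  inv_mem' := by
    intro a ha
    simp only [Set.mem_setOf_eq] at *
    have h : ((a⁻¹ : (Matrix (Fin 2) (Fin 2) ℂ)ˣ) : Matrix (Fin 2) (Fin 2) ℂ).det *
        ((a : Matrix (Fin 2) (Fin 2) ℂ)).det = 1 := by
      rw [← Matrix.det_mul, ← Units.val_mul, inv_mul_cancel, Units.val_one, Matrix.det_one]
    rw [ha, mul_one] at h
    exact h

theorem inv_val_of {x : Matrix.GeneralLinearGroup (Fin 2) ℂ} {t t' : Q}
    (hx : (x : Matrix (Fin 2) (Fin 2) ℂ) = toMC t) (h : t' * t = 1) :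
    ((x⁻¹ : Matrix.GeneralLinearGroup (Fin 2) ℂ) : Matrix (Fin 2) (Fin 2) ℂ) = toMC t' := by
  have h1 : toMC t' * (x : Matrix (Fin 2) (Fin 2) ℂ) = 1 := by
    rw [hx, ← toMC_mul, h, toMC_one]
  calc ((x⁻¹ : Matrix.GeneralLinearGroup (Fin 2) ℂ) : Matrix (Fin 2) (Fin 2) ℂ)
      = 1 * _ := (one_mul _).symm
    _ = toMC t' * ((x : Matrix (Fin 2) (Fin 2) ℂ) *
        ((x⁻¹ : Matrix.GeneralLinearGroup (Fin 2) ℂ) : Matrix (Fin 2) (Fin 2) ℂ)) := by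
        rw [← h1, mul_assoc]
    _ = toMC t' * 1 := by rw [← Units.val_mul, mul_inv_cancel, Units.val_one]
    _ = toMC t' := mul_one _

theorem G_sub : ∀ g ∈ G Complex.I, ∃ q ∈ Tlist,
    (g : Matrix (Fin 2) (Fin 2) ℂ) = toMC q := by
  intro g hg
  induction hg using Subgroup.closure_induction_left with
  | one => exact ⟨1, h1T, (Units.val_one).trans toMC_one.symm⟩
  | mul_left x hx y hy ih =>
    obtain ⟨q, hqT, hqv⟩ := ih
    rcases hx with hx | hx
    · exact ⟨qR * q, hclosR q hqT, by
        rw [Units.val_mul, hx, hRmat, hqv, toMC_mul]⟩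
    · exact ⟨qS * q, hclosS q hqT, by
        rw [Units.val_mul, hx, hSmat, hqv, toMC_mul]⟩
  | inv_mul_cancel x hx y hy ih =>
    obtain ⟨q, hqT, hqv⟩ := ih
    rcases hx with hx | hx
    · exact ⟨qRi * q, hclosRi q hqT, by
        rw [Units.val_mul, inv_val_of (hx.trans hRmat) qRi_mul, hqv, toMC_mul]⟩
    · exact ⟨qSi * q, hclosSi q hqT, by
        rw [Units.val_mul, inv_val_of (hx.trans hSmat) qSi_mul, hqv, toMC_mul]⟩

theorem sub_G : ∀ q ∈ Tlist, ∃ g ∈ G Complex.I,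
    (g : Matrix (Fin 2) (Fin 2) ℂ) = toMC q := by
  intro q hq
  rw [← hWmap] at hq
  obtain ⟨w, _, hwq⟩ := List.mem_map.mp hq
  exact ⟨wordU w, wordU_mem w, by rw [wordU_val, hwq]⟩

theorem cardG : Nat.card ↥(G Complex.I) = 96 := by
  have hinj : Function.Injective
      (fun g : Matrix.GeneralLinearGroup (Fin 2) ℂ => (g : Matrix (Fin 2) (Fin 2) ℂ)) :=
    fun a b h => Units.ext h
  have himg : (fun g : Matrix.GeneralLinearGroup (Fin 2) ℂ =>
        (g : Matrix (Fin 2) (Fin 2) ℂ)) '' (G Complex.I : Set _)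
      = toMC '' (Tlist.toFinset : Set Q) := by
    ext m
    constructor
    · rintro ⟨g, hg, rfl⟩
      obtain ⟨q, hq, hv⟩ := G_sub g hg
      exact ⟨q, by simpa using List.mem_toFinset.mpr hq, hv.symm⟩
    · rintro ⟨q, hq, rfl⟩
      obtain ⟨g, hg, hv⟩ := sub_G q (List.mem_toFinset.mp (by simpa using hq))
      exact ⟨g, hg, hv⟩
  have : Nat.card ↥(G Complex.I) = ((G Complex.I : Set (Matrix.GeneralLinearGroup (Fin 2) ℂ))).ncard := by
    rw [← Nat.card_coe_set_eq]
    rfl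
  rw [this, ← Set.ncard_image_of_injective _ hinj, himg,
    Set.ncard_image_of_injective _ toMC_inj, Set.ncard_coe_finset,
    List.toFinset_card_of_nodup hnodupT, hTlen]

set_option maxRecDepth 100000 in
theorem SL3_core : ∀ a b c d : ZMod 3, a*d - b*c = 1 →
    (!![a,b;c,d] : Matrix (Fin 2) (Fin 2) (ZMod 3)) ^ 8 = 1 → !![a,b;c,d] ^ 4 = 1 := by
  decide

theorem zmod4_pow : ∀ z : Multiplicative (ZMod 4), z^4 = 1 := by decide

theorem P_pow (p : Matrix.SpecialLinearGroup (Fin 2) (ZMod 3) × Multiplicative (ZMod 4))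
    (h : p ^ 8 = 1) : p ^ 4 = 1 := by
  obtain ⟨m, z⟩ := p
  rw [Prod.pow_def] at h ⊢
  rw [Prod.ext_iff] at h ⊢
  refine ⟨?_, zmod4_pow z⟩
  have h1 : m ^ 8 = 1 := h.1
  obtain ⟨M, hdet⟩ := m
  have hM : M = !![M 0 0, M 0 1; M 1 0, M 1 1] := Matrix.eta_fin_two M
  have hd : M 0 0 * M 1 1 - M 0 1 * M 1 0 = 1 := by
    rw [← Matrix.det_fin_two]; exact hdet
  have h8 : M ^ 8 = 1 := by
    have := Matrix.SpecialLinearGroup.coe_pow (⟨M, hdet⟩ : Matrix.SpecialLinearGroup (Fin 2) (ZMod 3)) 8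
    rw [h1] at this
    exact this.symm.trans Matrix.SpecialLinearGroup.coe_one
  have h4 : M ^ 4 = 1 := by
    rw [hM] at h8 ⊢
    exact SL3_core _ _ _ _ hd h8
  exact Subtype.ext (by rw [Matrix.SpecialLinearGroup.coe_pow]; exact h4)

theorem pow2_eq {M : Type*} [Monoid M] (m : M) : m ^ 2 = m * m := by
  rw [pow_succ, pow_one]

theorem pow4_eq {M : Type*} [Monoid M] (m : M) : m ^ 4 = ((m * m) * m) * m := by
  rw [pow_succ, pow_succ, pow_succ, pow_one]

theorem pow8_eq {M : Type*} [Monoid M] (m : M) :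
    m ^ 8 = ((((((m * m) * m) * m) * m) * m) * m) * m := by
  rw [pow_succ, pow_succ, pow_succ, pow_succ, pow_succ, pow_succ, pow_succ, pow_one]

theorem qR4_eq : ((qR * qR) * qR) * qR = 1 := by decide
theorem qR2_ne : qR * qR ≠ 1 := by decide
theorem qS4_ne : ((qS * qS) * qS) * qS ≠ 1 := by decide
theorem qS8_eq : ((((((qS * qS) * qS) * qS) * qS) * qS) * qS) * qS = 1 := by decide

theorem uS_pow8 : uS ^ 8 = 1 := by
  apply Units.ext
  rw [Units.val_pow_eq_pow_val, Units.val_one, uS_val, hSmat, pow8_eq,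
    ← toMC_mul, ← toMC_mul, ← toMC_mul, ← toMC_mul, ← toMC_mul, ← toMC_mul, ← toMC_mul,
    qS8_eq, toMC_one]

theorem uS_pow4 : uS ^ 4 ≠ 1 := by
  intro h
  have hv := congrArg Units.val h
  rw [Units.val_pow_eq_pow_val, Units.val_one, uS_val, hSmat, pow4_eq,
    ← toMC_mul, ← toMC_mul, ← toMC_mul, ← toMC_one] at hv
  exact qS4_ne (toMC_inj hv)

theorem G_i_structure (u : Matrix.GeneralLinearGroup (Fin 2) ℂ)
    (hu : (u : Matrix (Fin 2) (Fin 2) ℂ) = Rmat Complex.I) :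
    (∀ g ∈ G Complex.I, ∀ h ∈ G Complex.I ⊓ detOne,
      g * h * g⁻¹ ∈ G Complex.I ⊓ detOne) ∧
    Subgroup.zpowers u ≤ G Complex.I ∧
    orderOf u = 4 ∧
    ((Subgroup.zpowers u : Subgroup (Matrix.GeneralLinearGroup (Fin 2) ℂ)) :
        Set (Matrix.GeneralLinearGroup (Fin 2) ℂ)) ∩
      ((G Complex.I ⊓ detOne : Subgroup (Matrix.GeneralLinearGroup (Fin 2) ℂ)) :
        Set (Matrix.GeneralLinearGroup (Fin 2) ℂ)) = {1} ∧
    (∀ g ∈ G Complex.I, ∃ h ∈ G Complex.I ⊓ detOne, ∃ k ∈ Subgroup.zpowers u, g = h * k) ∧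
    Nat.card ↥(G Complex.I) = 96 ∧
    ¬ Nonempty (↥(G Complex.I) ≃*
      Matrix.SpecialLinearGroup (Fin 2) (ZMod 3) × Multiplicative (ZMod 4)) := by
  have u_mem : u ∈ G Complex.I := Subgroup.subset_closure (Or.inl hu)
  have hdu_val : ((Matrix.GeneralLinearGroup.det u : ℂˣ) : ℂ) = Complex.I := by
    rw [Matrix.GeneralLinearGroup.val_det_apply, hu, det_Rmat]
  -- order of u
  have hu4 : u ^ 4 = 1 := by
    apply Units.ext
    rw [Units.val_pow_eq_pow_val, Units.val_one, hu, hRmat, pow4_eq,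
      ← toMC_mul, ← toMC_mul, ← toMC_mul, qR4_eq, toMC_one]
  have hu2 : u ^ 2 ≠ 1 := by
    intro h
    have hv := congrArg Units.val h
    rw [Units.val_pow_eq_pow_val, Units.val_one, hu, hRmat, pow2_eq,
      ← toMC_mul, ← toMC_one] at hv
    exact qR2_ne (toMC_inj hv)
  have horder_u : orderOf u = 4 := by
    have := orderOf_eq_prime_pow (x := u) (p := 2) (n := 1)
      (by simpa using hu2) (by simpa using hu4)
    simpa using this
  -- order of det u
  have hdu4 : (Matrix.GeneralLinearGroup.det u) ^ 4 = 1 := by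
    apply Units.ext
    rw [Units.val_pow_eq_pow_val, hdu_val, Units.val_one, pow4_eq]
    simp [Complex.I_mul_I]
  have hdu2 : (Matrix.GeneralLinearGroup.det u) ^ 2 ≠ 1 := by
    intro h
    have hv := congrArg Units.val h
    rw [Units.val_pow_eq_pow_val, hdu_val, Units.val_one, pow2_eq, Complex.I_mul_I] at hv
    norm_num at hv
  have horder_du : orderOf (Matrix.GeneralLinearGroup.det u) = 4 := by
    have := orderOf_eq_prime_pow (x := Matrix.GeneralLinearGroup.det u) (p := 2) (n := 1)
      (by simpa using hdu2) (by simpa using hdu4)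
    simpa using this
  -- det maps G into zpowers (det u)
  have hcomap : G Complex.I ≤ Subgroup.comap (Matrix.GeneralLinearGroup.det)
      (Subgroup.zpowers (Matrix.GeneralLinearGroup.det u)) := by
    refine (Subgroup.closure_le _).mpr ?_
    rintro x (hx | hx)
    · have hxu : x = u := Units.ext (hx.trans hu.symm)
      rw [hxu]
      exact Subgroup.mem_zpowers _
    · refine Subgroup.mem_comap.mpr (Subgroup.mem_zpowers_iff.mpr ⟨-1, Units.ext ?_⟩)
      rw [zpow_neg_one, Units.val_inv_eq_inv_val, hdu_val,
        Matrix.GeneralLinearGroup.val_det_apply, hx, det_Smat]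
  refine ⟨?_, Subgroup.zpowers_le.mpr u_mem, horder_u, ?_, ?_, cardG, ?_⟩
  · -- normality of G ⊓ detOne
    intro g hg h hh
    obtain ⟨hhG, hhdet⟩ := Subgroup.mem_inf.mp hh
    refine Subgroup.mem_inf.mpr ⟨mul_mem (mul_mem hg hhG) (inv_mem hg), ?_⟩
    have hd1 : Matrix.GeneralLinearGroup.det (g * h * g⁻¹)
        = Matrix.GeneralLinearGroup.det h := by
      rw [map_mul, map_mul, map_inv,
        mul_comm (Matrix.GeneralLinearGroup.det g) (Matrix.GeneralLinearGroup.det h),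
        mul_assoc, mul_inv_cancel, mul_one]
    have hv := congrArg Units.val hd1
    rw [Matrix.GeneralLinearGroup.val_det_apply,
      Matrix.GeneralLinearGroup.val_det_apply] at hv
    show ((g * h * g⁻¹ : Matrix.GeneralLinearGroup (Fin 2) ℂ) :
      Matrix (Fin 2) (Fin 2) ℂ).det = 1
    rw [hv]
    exact hhdet
  · -- trivial intersection
    ext x
    simp only [Set.mem_inter_iff, SetLike.mem_coe, Set.mem_singleton_iff]
    constructor
    · rintro ⟨hxz, hxGd⟩
      obtain ⟨n, rfl⟩ := Subgroup.mem_zpowers_iff.mp hxz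
      have hdet1 : Matrix.GeneralLinearGroup.det (u ^ n) = 1 := by
        apply Units.ext
        rw [Matrix.GeneralLinearGroup.val_det_apply, Units.val_one]
        exact (Subgroup.mem_inf.mp hxGd).2
      rw [map_zpow] at hdet1
      have hdvd : ((orderOf (Matrix.GeneralLinearGroup.det u) : ℤ)) ∣ n :=
        orderOf_dvd_iff_zpow_eq_one.mpr hdet1
      rw [horder_du] at hdvd
      exact orderOf_dvd_iff_zpow_eq_one.mp (by rw [horder_u]; exact_mod_cast hdvd)
    · rintro rfl
      exact ⟨one_mem _, one_mem _⟩
  · -- decomposition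
    intro g hg
    obtain ⟨n, hn⟩ := Subgroup.mem_zpowers_iff.mp (Subgroup.mem_comap.mp (hcomap hg))
    refine ⟨g * (u ^ n)⁻¹, Subgroup.mem_inf.mpr
      ⟨mul_mem hg (inv_mem (Subgroup.zpow_mem _ u_mem n)), ?_⟩,
      u ^ n, Subgroup.mem_zpowers_iff.mpr ⟨n, rfl⟩, (inv_mul_cancel_right g _).symm⟩
    have hd1 : Matrix.GeneralLinearGroup.det (g * (u ^ n)⁻¹) = 1 := by
      rw [map_mul, map_inv, map_zpow, hn, mul_inv_cancel]
    have hv := congrArg Units.val hd1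
    rw [Matrix.GeneralLinearGroup.val_det_apply, Units.val_one] at hv
    exact hv
  · -- not isomorphic to SL(2,3) × C4
    rintro ⟨e⟩
    set s' : ↥(G Complex.I) := ⟨uS, uS_mem⟩ with hs'
    have h8 : s' ^ 8 = 1 := by
      apply Subtype.ext
      rw [SubmonoidClass.coe_pow]
      exact uS_pow8
    have h4 : s' ^ 4 ≠ 1 := by
      intro h
      apply uS_pow4
      have := congrArg Subtype.val h
      rwa [SubmonoidClass.coe_pow] at this
    have he8 : (e s') ^ 8 = 1 := by rw [← map_pow, h8, map_one]
    have he4 : (e s') ^ 4 = 1 := P_pow _ he8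
    apply h4
    apply e.injective
    rw [map_pow, he4, map_one]
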